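/- The periodized Gaussian G[τ] = Σ_{m∈Z} e^{−π(τ/√N + m√N)²} is an eigenvector of the discrete Fourier transform on L²(Z/N). -/

import Mathlib

/-- Unitary discrete Fourier transform. -/
noncomputable def dftU (N : ℕ) [NeZero N] (S : ZMod N → ℂ) (ω : ZMod N) : ℂ :=
  (1 / Real.sqrt N : ℝ) *
    ∑ τ : ZMod N, S τ * Complex.exp (-(2 * Real.pi * Complex.I * ((ω * τ).val : ℂ) / N))

/-- The periodized Gaussian `G[τ] = Σ_{m∈Z} e^{−π(τ/√N + m√N)²}`. -/
noncomputable def periodizedGaussian (N : ℕ) [NeZero N] : ZMod N → ℂ :=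
  fun τ => ((∑' m : ℤ, Real.exp (-Real.pi * ((τ.val : ℝ) / Real.sqrt N + m * Real.sqrt N) ^ 2) : ℝ) : ℂ)

open Complex

/-- Auxiliary equivalence between `Fin N` and `ZMod N`. -/
def finZModEquiv (N : ℕ) [NeZero N] : Fin N ≃ ZMod N where
  toFun r := ((r : ℕ) : ZMod N)
  invFun τ := ⟨τ.val, ZMod.val_lt τ⟩
  left_inv r := by ext; simp [ZMod.val_natCast_of_lt r.2]
  right_inv τ := by simp [ZMod.natCast_zmod_val]

/-- The periodized Gaussian is an eigenvector of the discrete Fourier transform. -/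
theorem periodizedGaussian_eigenvector (N : ℕ) [NeZero N] :
    ∃ c : ℂ, ∀ ω : ZMod N, dftU N (periodizedGaussian N) ω = c * periodizedGaussian N ω := by
  refine ⟨1, fun ω => ?_⟩
  have hN0 : (N : ℝ) ≠ 0 := Nat.cast_ne_zero.mpr (NeZero.ne N)
  have hNpos : (0 : ℝ) < N := Nat.cast_pos.mpr (Nat.pos_of_ne_zero (NeZero.ne N))
  set s : ℝ := Real.sqrt N with hs_def
  have hs2 : s ^ 2 = N := Real.sq_sqrt (le_of_lt hNpos)
  have hsne : s ≠ 0 := by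
    intro h; rw [h] at hs2; simp at hs2; exact hN0 hs2.symm
  have hsC : ((s : ℂ)) ≠ 0 := ofReal_ne_zero.mpr hsne
  have hNC : (N : ℂ) = (s : ℂ) ^ 2 := by
    have := congrArg (Complex.ofReal) hs2
    push_cast at this
    exact this.symm
  have hNCne : (N : ℂ) ≠ 0 := by rw [hNC]; exact pow_ne_zero 2 hsC
  set a : ℂ := (((N : ℝ)⁻¹ : ℝ) : ℂ) with ha_def
  set b : ℂ := -(Complex.I * ((ω.val : ℕ) : ℂ) / N) with hb_def
  set F : ℤ → ℂ := fun n => Complex.exp (-(Real.pi : ℂ) * a * (n : ℂ) ^ 2 + 2 * (Real.pi : ℂ) * b * (n : ℂ)) with hF_def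
  have ha_re : 0 < a.re := by
    rw [ha_def, Complex.ofReal_re]; exact inv_pos.mpr hNpos
  -- summability of F
  have hsum : Summable F := by
    have h := (summable_jacobiTheta₂_term_iff (-Complex.I * b) (Complex.I * a)).mpr ?_
    · refine h.congr fun n => ?_
      rw [jacobiTheta₂_term]
      congr 1
      linear_combination ((Real.pi : ℂ) * (n : ℂ) ^ 2 * a - 2 * (Real.pi : ℂ) * (n : ℂ) * b) * Complex.I_sq
    · rw [ha_def]
      simp only [Complex.mul_im, Complex.I_re, Complex.I_im, Complex.ofReal_re, Complex.ofReal_im]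
      simpa using inv_pos.mpr hNpos
  -- key pointwise identity
  have key1 : ∀ (v : ℕ) (m : ℤ), F (m * N + v) =
      ((Real.exp (-Real.pi * ((v : ℝ) / s + m * s) ^ 2) : ℝ) : ℂ) *
        Complex.exp (-(2 * Real.pi * Complex.I * (ω.val : ℂ) * (v : ℂ) / N)) := by
    intro v m
    rw [hF_def]
    simp only
    rw [Complex.ofReal_exp, ← Complex.exp_add]
    have hexp : (-(Real.pi : ℂ) * a * ((m * N + v : ℤ) : ℂ) ^ 2 + 2 * (Real.pi : ℂ) * b * ((m * N + v : ℤ) : ℂ))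
        = ((-Real.pi * ((v : ℝ) / s + m * s) ^ 2 : ℝ) : ℂ) + (-(2 * Real.pi * Complex.I * (ω.val : ℂ) * (v : ℂ) / N))
          + ((-((ω.val : ℤ) * m) : ℤ) : ℂ) * (2 * Real.pi * Complex.I) := by
      rw [ha_def, hb_def]
      push_cast
      rw [hNC]
      field_simp
      ring
    rw [hexp, Complex.exp_add, Complex.exp_int_mul_two_pi_mul_I, mul_one]
  -- phase rewriting
  have key2 : ∀ τ : ZMod N,
      Complex.exp (-(2 * Real.pi * Complex.I * (ω.val : ℂ) * (τ.val : ℂ) / N))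
        = Complex.exp (-(2 * Real.pi * Complex.I * (((ω * τ).val : ℕ) : ℂ) / N)) := by
    intro τ
    obtain ⟨q, hq⟩ : ∃ q : ℕ, ω.val * τ.val = N * q + (ω * τ).val :=
      ⟨ω.val * τ.val / N, by rw [ZMod.val_mul]; exact (Nat.div_add_mod _ _).symm⟩
    have h3 : ((ω.val : ℕ) : ℂ) * ((τ.val : ℕ) : ℂ) = (N : ℂ) * (q : ℂ) + (((ω * τ).val : ℕ) : ℂ) := by
      exact_mod_cast congrArg (fun k : ℕ => (k : ℂ)) hq
    have hexp : (-(2 * Real.pi * Complex.I * (ω.val : ℂ) * (τ.val : ℂ) / N))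
        = (-(2 * Real.pi * Complex.I * (((ω * τ).val : ℕ) : ℂ) / N))
          + ((-(q : ℤ) : ℤ) : ℂ) * (2 * Real.pi * Complex.I) := by
      revert h3
      generalize ((ω.val : ℕ) : ℂ) = w
      generalize ((τ.val : ℕ) : ℂ) = t
      generalize (((ω * τ).val : ℕ) : ℂ) = r
      intro h3
      push_cast
      field_simp
      linear_combination (-1 : ℂ) * h3
    rw [hexp, Complex.exp_add, Complex.exp_int_mul_two_pi_mul_I, mul_one]
  -- step 1 : each DFT summand is a tsum of F values
  have step1 : ∀ τ : ZMod N,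
      periodizedGaussian N τ * Complex.exp (-(2 * Real.pi * Complex.I * (((ω * τ).val : ℕ) : ℂ) / N))
        = ∑' m : ℤ, F (m * N + τ.val) := by
    intro τ
    rw [periodizedGaussian, Complex.ofReal_tsum, ← tsum_mul_right]
    refine (tsum_congr fun m => ?_).symm
    rw [key1 τ.val m, key2 τ]
  -- step 2 : reindex
  have step2 : (∑ τ : ZMod N, ∑' m : ℤ, F (m * N + τ.val)) = ∑' n : ℤ, F n := by
    have hE := (Int.divModEquiv N).symm.tsum_eq F
    have hsum' : Summable (F ∘ (Int.divModEquiv N).symm) :=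
      (Equiv.summable_iff _).mpr hsum
    rw [← hE]
    have hprod : (∑' p : ℤ × Fin N, F ((Int.divModEquiv N).symm p))
        = ∑' m : ℤ, ∑' r : Fin N, F ((Int.divModEquiv N).symm (m, r)) := Summable.tsum_prod hsum'
    rw [hprod]
    refine Eq.symm ?_
    simp only [Int.divModEquiv_symm_apply]
    have hfin : ∀ m : ℤ, (∑' r : Fin N, F (m * N + ((r : ℕ) : ℤ))) = ∑ r : Fin N, F (m * N + ((r : ℕ) : ℤ)) :=
      fun m => tsum_fintype _
    have hswap : (∑' m : ℤ, ∑ r : Fin N, F (m * N + ((r : ℕ) : ℤ)))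
        = ∑ r : Fin N, ∑' m : ℤ, F (m * N + ((r : ℕ) : ℤ)) := by
      refine Summable.tsum_finsetSum fun r _ => ?_
      have hinj : Function.Injective (fun m : ℤ => m * N + ((r : ℕ) : ℤ)) := by
        intro x y h
        simp only at h
        exact mul_right_cancel₀ (Int.natCast_ne_zero.mpr (NeZero.ne N)) (add_right_cancel h)
      exact hsum.comp_injective hinj
    rw [tsum_congr hfin, hswap]
    refine Fintype.sum_equiv (finZModEquiv N) _ _ fun r => ?_
    have hval : ((finZModEquiv N) r).val = (r : ℕ) := ZMod.val_natCast_of_lt r.2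
    rw [hval]
  -- step 3 : Poisson / Gaussian transformation
  have step3 : (∑' n : ℤ, F n) = (s : ℂ) * periodizedGaussian N ω := by
    rw [hF_def]
    rw [Complex.tsum_exp_neg_quadratic ha_re b]
    congr 1
    · -- 1 / a ^ (1/2) = s
      rw [ha_def]
      have h12 : ((1 / 2 : ℂ)) = (((1 : ℝ) / 2 : ℝ) : ℂ) := by norm_num
      have hr : ((N : ℝ)⁻¹) ^ ((1 : ℝ) / 2) = s⁻¹ := by
        rw [Real.inv_rpow hNpos.le, ← Real.sqrt_eq_rpow]
      rw [h12, ← Complex.ofReal_cpow (by positivity) ((1 : ℝ) / 2), hr]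
      push_cast
      field_simp
    · have hIb : Complex.I * b = ((ω.val : ℕ) : ℂ) / (N : ℂ) := by
        rw [hb_def, mul_neg, ← mul_div_assoc, ← mul_assoc, Complex.I_mul_I, neg_one_mul, neg_div, neg_neg]
      rw [periodizedGaussian, Complex.ofReal_tsum]
      refine tsum_congr fun n => ?_
      rw [Complex.ofReal_exp]
      congr 1
      rw [hIb, ha_def]
      push_cast
      rw [← hs_def]
      rw [hNC]
      field_simp
      ring
  -- assemble
  rw [dftU]
  have hrw : (∑ τ : ZMod N, periodizedGaussian N τ *
        Complex.exp (-(2 * Real.pi * Complex.I * (((ω * τ).val : ℕ) : ℂ) / N)))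
      = ∑ τ : ZMod N, ∑' m : ℤ, F (m * N + τ.val) := Finset.sum_congr rfl fun τ _ => step1 τ
  rw [hrw, step2, step3, one_mul, ← mul_assoc]
  have : ((1 / s : ℝ) : ℂ) * (s : ℂ) = 1 := by
    push_cast
    field_simp
  rw [this, one_mul]
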